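/- Stability with respect to the Allee threshold: if y₁ and y₂ solve y' = r y(1-y)(y/θᵢ(t) - 1) with the same initial value y₀ ∈ (0,1) and continuous thresholds θ₁, θ₂ taking values in [θ₋, θ₊] with θ₋ > 0, θ₊ > 1, then |y₁(t) - y₂(t)| ≤ (4 r t / (27 θ₋²)) · exp(r t · max((θ₊ - 1)²/(3θ₋) + 1/3, 1)) · sup_{s∈[0,t]} |θ₁(s) - θ₂(s)|. -/

import Mathlib

open Set

/-- The transform with `Φ' y = (4/27) / (y^2 (1-y))`. -/
noncomputable def PhiT (y : ℝ) : ℝ := (4 / 27) * (Real.log y - Real.log (1 - y) - 1 / y)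

lemma cube_bound {y : ℝ} (h : y ∈ Ioo (0:ℝ) 1) : y ^ 2 * (1 - y) ≤ 4 / 27 := by
  nlinarith [sq_nonneg (y - 2/3), h.1, h.2]

lemma hasDerivAt_PhiT {y : ℝ} (h0 : 0 < y) (h1 : y < 1) :
    HasDerivAt PhiT ((4 / 27) * (1 / y + 1 / (1 - y) + 1 / y ^ 2)) y := by
  have hy : y ≠ 0 := ne_of_gt h0
  have h1y : (1:ℝ) - y ≠ 0 := by linarith
  have hlog : HasDerivAt Real.log (1 / y) y := by
    simpa [one_div] using Real.hasDerivAt_log hy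
  have hlog2 : HasDerivAt (fun x : ℝ => Real.log (1 - x)) (-(1 / (1 - y))) y := by
    have hinner : HasDerivAt (fun x : ℝ => 1 - x) (-1) y := by
      exact (hasDerivAt_id' y).const_sub (1:ℝ)
    have := (Real.hasDerivAt_log h1y).comp y hinner
    rw [show -(1 / (1 - y)) = (1 - y)⁻¹ * -1 by ring]; exact this
  have hinv : HasDerivAt (fun x : ℝ => 1 / x) (-(1 / y ^ 2)) y := by
    simpa [one_div] using hasDerivAt_inv hy
  have := ((hlog.sub hlog2).sub hinv).const_mul ((4:ℝ) / 27)
  rw [show (4:ℝ) / 27 * (1 / y + 1 / (1 - y) + 1 / y ^ 2)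
    = 4 / 27 * (1 / y - -(1 / (1 - y)) - -(1 / y ^ 2)) by ring]
  exact this

/-- Monotonicity from a nonnegative derivative on `Ioo 0 1`. -/
lemma mono_aux {F F' : ℝ → ℝ} (hF : ∀ y ∈ Ioo (0:ℝ) 1, HasDerivAt F (F' y) y)
    (hF' : ∀ y ∈ Ioo (0:ℝ) 1, 0 ≤ F' y) {a b : ℝ} (ha : a ∈ Ioo (0:ℝ) 1)
    (hb : b ∈ Ioo (0:ℝ) 1) (hab : a ≤ b) : F a ≤ F b := by
  rcases eq_or_lt_of_le hab with rfl | hlt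
  · exact le_rfl
  have hsub : Icc a b ⊆ Ioo (0:ℝ) 1 := fun x hx =>
    ⟨lt_of_lt_of_le ha.1 hx.1, lt_of_le_of_lt hx.2 hb.2⟩
  have hcont : ContinuousOn F (Icc a b) := fun x hx =>
    (hF x (hsub hx)).continuousAt.continuousWithinAt
  have hderiv : ∀ x ∈ Ioo a b, HasDerivAt F (F' x) x := fun x hx =>
    hF x (hsub (Ioo_subset_Icc_self hx))
  obtain ⟨c, hc, hceq⟩ := exists_hasDerivAt_eq_slope F F' hlt hcont hderiv
  have h0 := hF' c (hsub (Ioo_subset_Icc_self hc))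
  rw [hceq] at h0
  have hba : (0:ℝ) < b - a := sub_pos.2 hlt
  have := mul_nonneg h0 hba.le
  rw [div_mul_cancel₀ _ (ne_of_gt hba)] at this
  linarith

lemma PhiT_deriv_ge_one {y : ℝ} (h : y ∈ Ioo (0:ℝ) 1) :
    1 ≤ (4 / 27) * (1 / y + 1 / (1 - y) + 1 / y ^ 2) := by
  have hy : (0:ℝ) < y := h.1
  have h1y : (0:ℝ) < 1 - y := by linarith [h.2]
  have hX : (0:ℝ) < y ^ 2 * (1 - y) := by positivity
  have hkey : 1 / y + 1 / (1 - y) + 1 / y ^ 2 = 1 / (y ^ 2 * (1 - y)) := by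
    field_simp
    ring
  rw [hkey]
  rw [mul_one_div, le_div_iff₀ hX, one_mul]
  exact cube_bound h

lemma PhiT_mono {a b : ℝ} (ha : a ∈ Ioo (0:ℝ) 1) (hb : b ∈ Ioo (0:ℝ) 1) (hab : a ≤ b) :
    b - a ≤ PhiT b - PhiT a ∧ (4 / 27) * (1 / a - 1 / b) ≤ PhiT b - PhiT a := by
  constructor
  · have := mono_aux (F := fun y => PhiT y - y)
      (F' := fun y => (4 / 27) * (1 / y + 1 / (1 - y) + 1 / y ^ 2) - 1)
      (fun y hy => (hasDerivAt_PhiT hy.1 hy.2).sub (hasDerivAt_id y))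
      (fun y hy => by linarith [PhiT_deriv_ge_one hy]) ha hb hab
    linarith
  · have := mono_aux (F := fun y => PhiT y + (4 / 27) * (1 / y))
      (F' := fun y => (4 / 27) * (1 / y + 1 / (1 - y) + 1 / y ^ 2) + (4 / 27) * (-(1 / y ^ 2)))
      (fun y hy => by
        have hy0 : y ≠ 0 := ne_of_gt hy.1
        have hinv : HasDerivAt (fun x : ℝ => 1 / x) (-(1 / y ^ 2)) y := by
          simpa [one_div] using hasDerivAt_inv hy0
        exact (hasDerivAt_PhiT hy.1 hy.2).add (hinv.const_mul ((4:ℝ) / 27)))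
      (fun y hy => by
        have hy : (0:ℝ) < y := hy.1
        have h1y : (0:ℝ) < 1 - y := by linarith [(by assumption : y ∈ Ioo (0:ℝ) 1).2]
        have h1 : (0:ℝ) ≤ 1 / y := by positivity
        have h2 : (0:ℝ) ≤ 1 / (1 - y) := by positivity
        nlinarith) ha hb hab
    linarith

lemma PhiT_abs {a b : ℝ} (ha : a ∈ Ioo (0:ℝ) 1) (hb : b ∈ Ioo (0:ℝ) 1) :
    |a - b| ≤ |PhiT a - PhiT b| ∧ (4 / 27) * |1 / a - 1 / b| ≤ |PhiT a - PhiT b| := by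
  rcases le_total a b with hab | hab
  · obtain ⟨h1, h2⟩ := PhiT_mono ha hb hab
    have hPhi : PhiT a ≤ PhiT b := by linarith
    have hinv : 1 / b ≤ 1 / a := one_div_le_one_div_of_le ha.1 hab
    rw [abs_sub_comm a b, abs_sub_comm (PhiT a) (PhiT b),
      abs_of_nonneg (by linarith : (0:ℝ) ≤ b - a),
      abs_of_nonneg (by linarith : (0:ℝ) ≤ PhiT b - PhiT a),
      abs_of_nonneg (by linarith : (0:ℝ) ≤ 1/a - 1/b)]
    exact ⟨h1, h2⟩
  · obtain ⟨h1, h2⟩ := PhiT_mono hb ha hab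
    have hinv : 1 / a ≤ 1 / b := one_div_le_one_div_of_le hb.1 hab
    rw [abs_of_nonneg (by linarith : (0:ℝ) ≤ a - b),
      abs_of_nonneg (by linarith : (0:ℝ) ≤ PhiT a - PhiT b),
      abs_sub_comm (1/a) (1/b),
      abs_of_nonneg (by linarith : (0:ℝ) ≤ 1/b - 1/a)]
    exact ⟨h1, h2⟩

/-- Stability of the logistic-Allee ODE with respect to the threshold function. -/
theorem stmt_1 (T r θm θp y₀ : ℝ) (hT : 0 < T) (hr : 0 < r)
    (hθm : 0 < θm) (hθp : 1 < θp)
    (θ₁ θ₂ : ℝ → ℝ) (hθ₁c : ContinuousOn θ₁ (Icc 0 T)) (hθ₂c : ContinuousOn θ₂ (Icc 0 T))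
    (hθ₁range : ∀ t ∈ Icc (0:ℝ) T, θ₁ t ∈ Icc θm θp)
    (hθ₂range : ∀ t ∈ Icc (0:ℝ) T, θ₂ t ∈ Icc θm θp)
    (y₁ y₂ : ℝ → ℝ)
    (hy₁ : ∀ t ∈ Icc (0:ℝ) T,
      HasDerivAt y₁ (r * y₁ t * (1 - y₁ t) * (y₁ t / θ₁ t - 1)) t)
    (hy₂ : ∀ t ∈ Icc (0:ℝ) T,
      HasDerivAt y₂ (r * y₂ t * (1 - y₂ t) * (y₂ t / θ₂ t - 1)) t)
    (hy₁0 : y₁ 0 = y₀) (hy₂0 : y₂ 0 = y₀) (hy₀ : y₀ ∈ Ioo (0:ℝ) 1)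
    (hy₁range : ∀ t ∈ Icc (0:ℝ) T, y₁ t ∈ Ioo (0:ℝ) 1)
    (hy₂range : ∀ t ∈ Icc (0:ℝ) T, y₂ t ∈ Ioo (0:ℝ) 1) :
    ∀ t ∈ Icc (0:ℝ) T,
      |y₁ t - y₂ t| ≤
        (4 * r * t / (27 * θm ^ 2)) *
          Real.exp (r * t * max ((θp - 1) ^ 2 / (3 * θm) + 1 / 3) 1) *
          sSup ((fun s => |θ₁ s - θ₂ s|) '' Icc (0:ℝ) t) := by
  intro t ht
  obtain ⟨ht0, htT⟩ := ht
  have hsub : Icc (0:ℝ) t ⊆ Icc (0:ℝ) T := Icc_subset_Icc le_rfl htT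
  set S : ℝ := sSup ((fun s => |θ₁ s - θ₂ s|) '' Icc (0:ℝ) t) with hS
  -- basic facts about S
  have hcontd : ContinuousOn (fun s => |θ₁ s - θ₂ s|) (Icc (0:ℝ) t) :=
    ((hθ₁c.mono hsub).sub (hθ₂c.mono hsub)).abs
  have hbdd : BddAbove ((fun s => |θ₁ s - θ₂ s|) '' Icc (0:ℝ) t) :=
    (isCompact_Icc.image_of_continuousOn hcontd).bddAbove
  have hSmem : ∀ s ∈ Icc (0:ℝ) t, |θ₁ s - θ₂ s| ≤ S :=
    fun s hs => le_csSup hbdd (mem_image_of_mem _ hs)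
  have hS0 : 0 ≤ S := le_trans (abs_nonneg _) (hSmem 0 ⟨le_rfl, ht0⟩)
  -- the transformed difference
  set v : ℝ → ℝ := fun s => PhiT (y₁ s) - PhiT (y₂ s) with hv
  set v' : ℝ → ℝ := fun s =>
    (4 * r / 27) * (1 / θ₁ s - 1 / y₁ s) - (4 * r / 27) * (1 / θ₂ s - 1 / y₂ s) with hv'
  have hvderiv : ∀ s ∈ Icc (0:ℝ) t, HasDerivAt v (v' s) s := by
    intro s hs
    have hs' := hsub hs
    have hy1 := hy₁range s hs'
    have hy2 := hy₂range s hs'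
    have hθ1 := hθ₁range s hs'
    have hθ2 := hθ₂range s hs'
    have hθ1pos : 0 < θ₁ s := lt_of_lt_of_le hθm hθ1.1
    have hθ2pos : 0 < θ₂ s := lt_of_lt_of_le hθm hθ2.1
    have h1 : HasDerivAt (fun x => PhiT (y₁ x))
        ((4 / 27) * (1 / y₁ s + 1 / (1 - y₁ s) + 1 / (y₁ s) ^ 2) *
          (r * y₁ s * (1 - y₁ s) * (y₁ s / θ₁ s - 1))) s :=
      (hasDerivAt_PhiT hy1.1 hy1.2).comp s (hy₁ s hs')
    have h2 : HasDerivAt (fun x => PhiT (y₂ x))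
        ((4 / 27) * (1 / y₂ s + 1 / (1 - y₂ s) + 1 / (y₂ s) ^ 2) *
          (r * y₂ s * (1 - y₂ s) * (y₂ s / θ₂ s - 1))) s :=
      (hasDerivAt_PhiT hy2.1 hy2.2).comp s (hy₂ s hs')
    have e1 : (4 / 27) * (1 / y₁ s + 1 / (1 - y₁ s) + 1 / (y₁ s) ^ 2) *
        (r * y₁ s * (1 - y₁ s) * (y₁ s / θ₁ s - 1)) =
        (4 * r / 27) * (1 / θ₁ s - 1 / y₁ s) := by
      have h0 : y₁ s ≠ 0 := ne_of_gt hy1.1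
      have h1' : (1:ℝ) - y₁ s ≠ 0 := by have := hy1.2; intro h; linarith [h]
      have hθ : θ₁ s ≠ 0 := ne_of_gt hθ1pos
      field_simp
      ring
    have e2 : (4 / 27) * (1 / y₂ s + 1 / (1 - y₂ s) + 1 / (y₂ s) ^ 2) *
        (r * y₂ s * (1 - y₂ s) * (y₂ s / θ₂ s - 1)) =
        (4 * r / 27) * (1 / θ₂ s - 1 / y₂ s) := by
      have h0 : y₂ s ≠ 0 := ne_of_gt hy2.1
      have h1' : (1:ℝ) - y₂ s ≠ 0 := by have := hy2.2; intro h; linarith [h]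
      have hθ : θ₂ s ≠ 0 := ne_of_gt hθ2pos
      field_simp
      ring
    rw [e1] at h1
    rw [e2] at h2
    exact h1.sub h2
  -- Gronwall
  set ε : ℝ := (4 * r / 27) * (S / θm ^ 2) with hε
  have hgron : ∀ s ∈ Icc (0:ℝ) t, ‖v s‖ ≤ gronwallBound 0 r ε (s - 0) := by
    apply norm_le_gronwallBound_of_norm_deriv_right_le
    · exact fun s hs => (hvderiv s hs).continuousAt.continuousWithinAt
    · exact fun s hs => (hvderiv s (Ico_subset_Icc_self hs)).hasDerivWithinAt
    · simp [hv, hy₁0, hy₂0]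
    · intro s hs
      have hs' : s ∈ Icc (0:ℝ) t := Ico_subset_Icc_self hs
      have hsT := hsub hs'
      have hy1 := hy₁range s hsT
      have hy2 := hy₂range s hsT
      have hθ1 := hθ₁range s hsT
      have hθ2 := hθ₂range s hsT
      have hθ1pos : 0 < θ₁ s := lt_of_lt_of_le hθm hθ1.1
      have hθ2pos : 0 < θ₂ s := lt_of_lt_of_le hθm hθ2.1
      have habs := PhiT_abs hy1 hy2
      -- bound on the θ part
      have hθbound : |1 / θ₁ s - 1 / θ₂ s| ≤ S / θm ^ 2 := by
        have hne1 : θ₁ s ≠ 0 := ne_of_gt hθ1pos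
        have hne2 : θ₂ s ≠ 0 := ne_of_gt hθ2pos
        have : 1 / θ₁ s - 1 / θ₂ s = (θ₂ s - θ₁ s) / (θ₁ s * θ₂ s) := by
          field_simp
        rw [this, abs_div, abs_of_pos (mul_pos hθ1pos hθ2pos)]
        have h1 : |θ₂ s - θ₁ s| ≤ S := by
          rw [abs_sub_comm]; exact hSmem s hs'
        have h2 : θm ^ 2 ≤ θ₁ s * θ₂ s := by nlinarith [hθ1.1, hθ2.1]
        exact div_le_div₀ hS0 h1 (by positivity) h2
      -- combine
      have hsplit : v' s = (4 * r / 27) * (1 / θ₁ s - 1 / θ₂ s)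
          - (4 * r / 27) * (1 / y₁ s - 1 / y₂ s) := by
        simp only [hv']; ring
      rw [Real.norm_eq_abs, Real.norm_eq_abs, hsplit]
      have hr427 : (0:ℝ) < 4 * r / 27 := by positivity
      calc |(4 * r / 27) * (1 / θ₁ s - 1 / θ₂ s) - (4 * r / 27) * (1 / y₁ s - 1 / y₂ s)|
          ≤ |(4 * r / 27) * (1 / y₁ s - 1 / y₂ s)| + |(4 * r / 27) * (1 / θ₁ s - 1 / θ₂ s)| := by
            rw [sub_eq_add_neg, add_comm]
            refine (abs_add_le _ _).trans ?_
            simp [abs_neg]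
        _ ≤ r * |v s| + ε := by
            apply add_le_add
            · rw [abs_mul, abs_of_pos hr427]
              have h427 : 4 * r / 27 * |1 / y₁ s - 1 / y₂ s|
                  = r * ((4 / 27) * |1 / y₁ s - 1 / y₂ s|) := by ring
              rw [h427]
              exact mul_le_mul_of_nonneg_left habs.2 hr.le
            · rw [abs_mul, abs_of_pos hr427, hε]
              exact mul_le_mul_of_nonneg_left hθbound hr427.le
  have hvt := hgron t ⟨ht0, le_rfl⟩
  rw [Real.norm_eq_abs, sub_zero, gronwallBound_of_K_ne_0 (ne_of_gt hr)] at hvt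
  -- final chain
  have hy1t := hy₁range t ⟨ht0, htT⟩
  have hy2t := hy₂range t ⟨ht0, htT⟩
  have hyv : |y₁ t - y₂ t| ≤ |v t| := (PhiT_abs hy1t hy2t).1
  set L : ℝ := max ((θp - 1) ^ 2 / (3 * θm) + 1 / 3) 1 with hL
  have hL1 : 1 ≤ L := le_max_right _ _
  have hrt0 : 0 ≤ r * t := by positivity
  have hexp1 : Real.exp (r * t) - 1 ≤ r * t * Real.exp (r * t) := by
    have h1 := Real.add_one_le_exp (-(r * t))
    have h2 : Real.exp (-(r * t)) * Real.exp (r * t) = 1 := by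
      rw [← Real.exp_add]; simp
    nlinarith [Real.exp_pos (r * t)]
  have hexp2 : Real.exp (r * t) ≤ Real.exp (r * t * L) := by
    apply Real.exp_le_exp.2
    nlinarith
  have hfinal : 0 * Real.exp (r * t) + ε / r * (Real.exp (r * t) - 1) ≤
      (4 * r * t / (27 * θm ^ 2)) * Real.exp (r * t * L) * S := by
    have hεr : ε / r = (4 / 27) * (S / θm ^ 2) := by
      rw [hε]; field_simp
    rw [zero_mul, zero_add, hεr]
    have hcoef : (0:ℝ) ≤ (4 / 27) * (S / θm ^ 2) := by positivity
    calc (4 / 27) * (S / θm ^ 2) * (Real.exp (r * t) - 1)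
        ≤ (4 / 27) * (S / θm ^ 2) * (r * t * Real.exp (r * t * L)) := by
          apply mul_le_mul_of_nonneg_left _ hcoef
          calc Real.exp (r * t) - 1 ≤ r * t * Real.exp (r * t) := hexp1
            _ ≤ r * t * Real.exp (r * t * L) := mul_le_mul_of_nonneg_left hexp2 hrt0
      _ = (4 * r * t / (27 * θm ^ 2)) * Real.exp (r * t * L) * S := by
          field_simp
  calc |y₁ t - y₂ t| ≤ |v t| := hyv
    _ ≤ 0 * Real.exp (r * t) + ε / r * (Real.exp (r * t) - 1) := hvt
    _ ≤ _ := hfinal
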